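/- Let x, x^s, g ∈ ℂ^n, let α, β > 0 and 0 < μ ≤ α/β². If Re⟨x − x^s, g⟩ ≥ α·‖x − x^s‖² and ‖g‖ ≤ β·‖x − x^s‖, then ‖x^s − (x − μ·g)‖² ≤ (1 − μα)·‖x − x^s‖². -/

import Mathlib

/-- deterministic contraction step for one gradient-descent iteration. -/
theorem contraction_step (n : ℕ) (x xs g : EuclideanSpace ℂ (Fin n)) (α β μ : ℝ)
    (hα : 0 < α) (hβ : 0 < β) (hμ0 : 0 < μ) (hμ : μ ≤ α / β ^ 2)
    (h1 : α * ‖x - xs‖ ^ 2 ≤ (inner ℂ (x - xs) g : ℂ).re)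
    (h2 : ‖g‖ ≤ β * ‖x - xs‖) :
    ‖xs - (x - μ • g)‖ ^ 2 ≤ (1 - μ * α) * ‖x - xs‖ ^ 2 := by
  have hrw : xs - (x - μ • g) = (xs - x) + μ • g := by abel
  have key : ‖xs - (x - μ • g)‖ ^ 2
      = ‖x - xs‖ ^ 2 - 2 * μ * (inner ℂ (x - xs) g : ℂ).re + μ ^ 2 * ‖g‖ ^ 2 := by
    rw [hrw, @norm_add_sq ℂ]
    have h3 : (inner ℂ (xs - x) ((μ:ℂ) • g) : ℂ) = (μ:ℂ) * inner ℂ (xs - x) g := by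
      rw [inner_smul_right]
    have h4 : (xs - x : EuclideanSpace ℂ (Fin n)) = -(x - xs) := by abel
    have h5 : ‖xs - x‖ = ‖x - xs‖ := by rw [h4, norm_neg]
    have h6 : (inner ℂ (xs - x) g : ℂ) = - inner ℂ (x - xs) g := by
      rw [h4, inner_neg_left]
    have hsmul : ((μ:ℂ) • g : EuclideanSpace ℂ (Fin n)) = μ • g := rfl
    rw [← hsmul, h3, h6, h5, norm_smul, Complex.norm_real, Real.norm_eq_abs,
      abs_of_pos hμ0]
    simp only [mul_neg, Complex.neg_re, Complex.re_ofReal_mul, RCLike.re_to_complex]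
    ring
  rw [key]
  have hg2 : ‖g‖ ^ 2 ≤ β ^ 2 * ‖x - xs‖ ^ 2 := by
    have := mul_self_le_mul_self (norm_nonneg g) h2
    nlinarith [norm_nonneg g]
  have hμβ : μ * β ^ 2 ≤ α := (le_div_iff₀ (by positivity : (0:ℝ) < β ^ 2)).mp hμ
  have e1 : μ * (α * ‖x - xs‖ ^ 2) ≤ μ * (inner ℂ (x - xs) g : ℂ).re :=
    mul_le_mul_of_nonneg_left h1 hμ0.le
  have e2 : μ ^ 2 * ‖g‖ ^ 2 ≤ μ ^ 2 * (β ^ 2 * ‖x - xs‖ ^ 2) :=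
    mul_le_mul_of_nonneg_left hg2 (sq_nonneg μ)
  have e3 : (μ * β ^ 2) * (μ * ‖x - xs‖ ^ 2) ≤ α * (μ * ‖x - xs‖ ^ 2) :=
    mul_le_mul_of_nonneg_right hμβ (by positivity)
  nlinarith [e1, e2, e3]
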